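/- Fix a real number N > 1 and D ∈ (0,π], and set ε := π − D. Every CD(N−1,N) density h on [0,D] with h(t) > 0 for all t ∈ (0,D) is locally Lipschitz on (0,D), and at every t ∈ (0,D) at which h is differentiable one has h_N′(t+ε)/h_N(t+ε) ≤ h′(t)/h(t) ≤ h_N′(t)/h_N(t). -/

import Mathlib

open Real MeasureTheory Set Filter
open Topology

/-- `ω_N = ∫_0^π sin^{N-1}(t) dt`. -/
noncomputable def omegaN (N : ℝ) : ℝ := ∫ t in (0:ℝ)..π, Real.sin t ^ (N - 1)
/-- The model density `h_N(t) = sin^{N-1}(t)/ω_N`. -/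
noncomputable def hmodel (N t : ℝ) : ℝ := Real.sin t ^ (N - 1) / omegaN N

lemma myLipschitzOnWith_congr {K : NNReal} {f g : ℝ → ℝ} {s : Set ℝ}
    (hf : LipschitzOnWith K f s) (hfg : Set.EqOn f g s) : LipschitzOnWith K g s := by
  intro x hx y hy
  rw [← hfg hx, ← hfg hy]; exact hf hx hy

lemma myderiv_nonneg_of_monoOn {g : ℝ → ℝ} {a b t g' : ℝ} (hat : a < t) (htb : t < b)
    (hm : ∀ x ∈ Set.Ioo a b, ∀ y ∈ Set.Ioo a b, x ≤ y → g x ≤ g y)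
    (hd : HasDerivAt g g' t) : 0 ≤ g' := by
  have h1 : Tendsto (slope g t) (𝓝[>] t) (𝓝 g') :=
    (hasDerivAt_iff_tendsto_slope.mp hd).mono_left
      (nhdsWithin_mono _ fun u hu => ne_of_gt hu)
  refine ge_of_tendsto h1 ?_
  filter_upwards [Ioo_mem_nhdsGT_of_mem (Set.mem_Ico.mpr ⟨le_refl t, htb⟩)] with u hu
  rw [slope_def_field]
  apply div_nonneg
  · exact sub_nonneg.2 (hm t ⟨hat, htb⟩ u ⟨hat.trans hu.1, hu.2⟩ hu.1.le)
  · exact sub_nonneg.2 hu.1.le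

lemma myomegaN_pos {N : ℝ} (hN1 : 1 < N) : 0 < omegaN N := by
  apply intervalIntegral.intervalIntegral_pos_of_pos_on
  · apply Continuous.intervalIntegrable
    exact continuous_iff_continuousAt.mpr fun x =>
      (Real.continuousAt_rpow_const _ _ (Or.inr (by linarith))).comp
        Real.continuous_sin.continuousAt
  · intro x hx
    exact Real.rpow_pos_of_pos (Real.sin_pos_of_pos_of_lt_pi hx.1 hx.2) _
  · exact Real.pi_pos

lemma mylogDeriv_hmodel {N u : ℝ} (hN1 : 1 < N) (hu0 : 0 < u) (huπ : u < π) :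
    deriv (hmodel N) u / hmodel N u = (N - 1) * (Real.cos u / Real.sin u) := by
  have hs : 0 < Real.sin u := Real.sin_pos_of_pos_of_lt_pi hu0 huπ
  have hd : HasDerivAt (fun v => Real.sin v ^ (N - 1))
      (Real.cos u * (N - 1) * Real.sin u ^ (N - 1 - 1)) u :=
    (Real.hasDerivAt_sin u).rpow_const (Or.inl hs.ne')
  have hd2 : HasDerivAt (hmodel N)
      (Real.cos u * (N - 1) * Real.sin u ^ (N - 1 - 1) / omegaN N) u := by
    exact hd.div_const (omegaN N)
  rw [hd2.deriv]
  have hω := myomegaN_pos hN1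
  have hpow : Real.sin u ^ (N - 1 - 1) = Real.sin u ^ (N - 1) / Real.sin u := by
    rw [Real.rpow_sub hs, Real.rpow_one]
  have hp : (0:ℝ) < Real.sin u ^ (N - 1) := Real.rpow_pos_of_pos hs _
  rw [hpow, hmodel]
  field_simp

lemma myrpow_lipschitz {p m M : ℝ} (hm : 0 < m) :
    ∃ K : NNReal, LipschitzOnWith K (fun z : ℝ => z ^ p) (Set.Icc m M) := by
  refine ⟨‖p‖₊ * (‖m ^ (p - 1)‖₊ + ‖M ^ (p - 1)‖₊), ?_⟩
  apply Convex.lipschitzOnWith_of_nnnorm_deriv_le ?_ ?_ (convex_Icc m M)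
  · intro z hz
    exact (Real.hasDerivAt_rpow_const (Or.inl (hm.trans_le hz.1).ne')).differentiableAt
  · intro z hz
    have hz0 : 0 < z := hm.trans_le hz.1
    have hM : 0 < M := hz0.trans_le hz.2
    rw [(Real.hasDerivAt_rpow_const (p := p) (Or.inl hz0.ne')).deriv, nnnorm_mul]
    refine mul_le_mul_right ?_ _
    rw [← NNReal.coe_le_coe]
    push_cast
    rw [Real.norm_eq_abs, Real.norm_eq_abs,
      Real.norm_eq_abs, abs_of_pos (Real.rpow_pos_of_pos hz0 _),
      abs_of_pos (Real.rpow_pos_of_pos hm _), abs_of_pos (Real.rpow_pos_of_pos hM _)]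
    rcases le_or_gt 0 (p - 1) with hp | hp
    · have : z ^ (p - 1) ≤ M ^ (p - 1) := Real.rpow_le_rpow hz0.le hz.2 hp
      nlinarith [Real.rpow_pos_of_pos hm (p - 1)]
    · have : z ^ (p - 1) ≤ m ^ (p - 1) := Real.rpow_le_rpow_of_nonpos hm hz.1 hp.le
      nlinarith [Real.rpow_pos_of_pos hM (p - 1)]




/-- `h` is a `CD(N-1,N)` density on `[0,D]`. -/
def IsCDDensity (N D : ℝ) (h : ℝ → ℝ) : Prop :=
  (∀ t ∈ Set.Icc (0:ℝ) D, 0 ≤ h t) ∧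
  ∀ t₀ t₁ s : ℝ, 0 ≤ t₀ → t₀ ≤ t₁ → t₁ ≤ D → s ∈ Set.Icc (0:ℝ) 1 →
    Real.sin ((1 - s) * (t₁ - t₀)) * h t₀ ^ (1 / (N - 1))
      + Real.sin (s * (t₁ - t₀)) * h t₁ ^ (1 / (N - 1))
    ≤ Real.sin (t₁ - t₀) * h ((1 - s) * t₀ + s * t₁) ^ (1 / (N - 1))

/-- Corollary A.2 (Corollary `C:A2`): a positive `CD(N-1,N)` density on `[0,D]` is
locally Lipschitz on `(0,D)`, and its logarithmic derivative is pinched between those of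
the model density (shifted by `ε = π - D`). -/
theorem cd_density_locally_lipschitz_and_logderiv (N D : ℝ) (hN1 : 1 < N)
    (hD : D ∈ Set.Ioc (0:ℝ) π) (h : ℝ → ℝ) (hcd : IsCDDensity N D h)
    (hpos : ∀ t ∈ Set.Ioo (0:ℝ) D, 0 < h t) :
    (∀ t ∈ Set.Ioo (0:ℝ) D, ∃ s > 0, ∃ K : NNReal,
        LipschitzOnWith K h (Set.Ioo (t - s) (t + s))) ∧
    ∀ t ∈ Set.Ioo (0:ℝ) D, DifferentiableAt ℝ h t →
      deriv (hmodel N) (t + (π - D)) / hmodel N (t + (π - D)) ≤ deriv h t / h t ∧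
      deriv h t / h t ≤ deriv (hmodel N) t / hmodel N t := by
  set f : ℝ → ℝ := fun u => h u ^ (1 / (N - 1)) with hf_def
  have claimA : ∀ a b : ℝ, 0 ≤ a → a ≤ b → b ≤ D →
      Real.sin a * f b ≤ Real.sin b * f a := by
    intro a b ha hab hbD
    rcases eq_or_lt_of_le (ha.trans hab) with hb0 | hb0
    · have ha0 : a = 0 := le_antisymm (hab.trans hb0.symm.le) ha
      rw [ha0, ← hb0]
    · have hs : a / b ∈ Set.Icc (0:ℝ) 1 :=
        ⟨div_nonneg ha hb0.le, (div_le_one hb0).2 hab⟩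
      have key := hcd.2 0 b (a / b) le_rfl (ha.trans hab) hbD hs
      have e1 : (a / b) * (b - 0) = a := by field_simp; ring
      have e2 : (1 - a / b) * 0 + (a / b) * b = a := by field_simp; ring
      have e3 : (1 - a / b) * (b - 0) = b - a := by field_simp; ring
      rw [e1, e2, e3, sub_zero] at key
      have h0 : 0 ≤ Real.sin (b - a) * h 0 ^ (1 / (N - 1)) :=
        mul_nonneg (Real.sin_nonneg_of_nonneg_of_le_pi (by linarith) (by linarith [hD.2]))
          (Real.rpow_nonneg (hcd.1 0 ⟨le_rfl, hD.1.le⟩) _)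
      simp only [hf_def]
      linarith
  have claimB : ∀ a b : ℝ, 0 ≤ a → a ≤ b → b ≤ D →
      Real.sin (D - b) * f a ≤ Real.sin (D - a) * f b := by
    intro a b ha hab hbD
    rcases eq_or_lt_of_le (hab.trans hbD) with haD | haD
    · have hbd : b = D := le_antisymm hbD (haD ▸ hab)
      rw [haD, hbd]
    · have hDa : 0 < D - a := by linarith
      have hs : (b - a) / (D - a) ∈ Set.Icc (0:ℝ) 1 :=
        ⟨div_nonneg (by linarith) hDa.le, (div_le_one hDa).2 (by linarith)⟩
      have key := hcd.2 a D ((b - a) / (D - a)) ha (hab.trans hbD) le_rfl hs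
      have e1 : ((b - a) / (D - a)) * (D - a) = b - a := div_mul_cancel₀ _ hDa.ne'
      have e2 : (1 - (b - a) / (D - a)) * a + ((b - a) / (D - a)) * D = b := by
        field_simp; ring
      have e3 : (1 - (b - a) / (D - a)) * (D - a) = D - b := by field_simp; ring
      rw [e1, e2, e3] at key
      have h0 : 0 ≤ Real.sin (b - a) * h D ^ (1 / (N - 1)) :=
        mul_nonneg (Real.sin_nonneg_of_nonneg_of_le_pi (by linarith) (by linarith [hD.2]))
          (Real.rpow_nonneg (hcd.1 D ⟨hD.1.le, le_rfl⟩) _)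
      simp only [hf_def]
      linarith
  have hfnn : ∀ x ∈ Set.Ioo (0:ℝ) D, 0 ≤ f x := fun x hx =>
    Real.rpow_nonneg (hpos x hx).le _
  have concave_ineq : ∀ x y : ℝ, x ∈ Set.Ioo (0:ℝ) D → y ∈ Set.Ioo (0:ℝ) D → x ≤ y →
      ∀ s ∈ Set.Icc (0:ℝ) 1, (1 - s) * f x + s * f y ≤ f ((1 - s) * x + s * y) := by
    intro x y hx hy hxy s hs
    rcases eq_or_lt_of_le hxy with rfl | hlt
    · have e : (1 - s) * x + s * x = x := by ring
      rw [e]; linarith [hfnn x hx]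
    · have hΔ : 0 < y - x := sub_pos.2 hlt
      have hΔπ : y - x < π := by
        rcases hx with ⟨hx1, _⟩; rcases hy with ⟨_, hy2⟩; linarith [hD.2]
      have hsin : 0 < Real.sin (y - x) := Real.sin_pos_of_pos_of_lt_pi hΔ hΔπ
      have key := hcd.2 x y s hx.1.le hxy hy.2.le hs
      have c1 : (1 - s) * Real.sin (y - x) ≤ Real.sin ((1 - s) * (y - x)) := by
        have := (strictConcaveOn_sin_Icc.concaveOn).2 (x := y - x) (y := (0:ℝ))
          ⟨by linarith, by linarith⟩ ⟨le_rfl, Real.pi_pos.le⟩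
          (by linarith [hs.2] : (0:ℝ) ≤ 1 - s) hs.1 (by ring)
        simpa using this
      have c2 : s * Real.sin (y - x) ≤ Real.sin (s * (y - x)) := by
        have := (strictConcaveOn_sin_Icc.concaveOn).2 (x := (0:ℝ)) (y := y - x)
          ⟨le_rfl, Real.pi_pos.le⟩ ⟨by linarith, by linarith⟩
          (by linarith [hs.2] : (0:ℝ) ≤ 1 - s) hs.1 (by ring)
        simpa using this
      have fx : 0 ≤ f x := hfnn x hx
      have fy : 0 ≤ f y := hfnn y hy
      have step : Real.sin (y - x) * ((1 - s) * f x + s * f y)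
          ≤ Real.sin (y - x) * f ((1 - s) * x + s * y) := by
        have m1 := mul_le_mul_of_nonneg_right c1 fx
        have m2 := mul_le_mul_of_nonneg_right c2 fy
        simp only [hf_def] at key ⊢
        nlinarith
      exact le_of_mul_le_mul_left step hsin
  have hconc : ConcaveOn ℝ (Set.Ioo (0:ℝ) D) f := by
    refine ⟨convex_Ioo _ _, ?_⟩
    intro x hx y hy a b ha hb hab
    rcases le_total x y with hxy | hyx
    · have := concave_ineq x y hx hy hxy b ⟨hb, by linarith⟩
      have ea : a = 1 - b := by linarith
      rw [ea]
      simpa using this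
    · have := concave_ineq y x hy hx hyx a ⟨ha, by linarith⟩
      have eb : b = 1 - a := by linarith
      have e : (1 - a) * y + a * x = a * x + b * y := by rw [eb]; ring
      rw [e] at this
      have e2 : b * f y = (1 - a) * f y := by rw [eb]
      simp only [smul_eq_mul]
      linarith
  have lip : ∀ t ∈ Set.Ioo (0:ℝ) D, ∃ s > 0, ∃ K : NNReal,
      LipschitzOnWith K h (Set.Ioo (t - s) (t + s)) := by
    intro t ht
    obtain ⟨K, u, hu, hK⟩ := hconc.locallyLipschitzOn isOpen_Ioo ht
    have hnhd : u ∈ 𝓝 t := by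
      rwa [nhdsWithin_eq_nhds.2 (isOpen_Ioo.mem_nhds ht)] at hu
    have hft : 0 < f t := Real.rpow_pos_of_pos (hpos t ht) _
    have hfc : ContinuousAt f t :=
      (hK.continuousOn t (mem_of_mem_nhds hnhd)).continuousAt hnhd
    have hIcc : Set.Icc (f t / 2) (2 * f t) ∈ 𝓝 (f t) :=
      Icc_mem_nhds (by linarith) (by linarith)
    have hmem : u ∩ f ⁻¹' Set.Icc (f t / 2) (2 * f t) ∩ Set.Ioo 0 D ∈ 𝓝 t :=
      inter_mem (inter_mem hnhd (hfc hIcc)) (isOpen_Ioo.mem_nhds ht)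
    obtain ⟨s, hs0, hball⟩ := Metric.mem_nhds_iff.1 hmem
    refine ⟨s, hs0, ?_⟩
    have hsub : Set.Ioo (t - s) (t + s) ⊆
        u ∩ f ⁻¹' Set.Icc (f t / 2) (2 * f t) ∩ Set.Ioo 0 D := by
      intro v hv
      exact hball (by rwa [Real.ball_eq_Ioo])
    obtain ⟨K2, hK2⟩ := myrpow_lipschitz (p := N - 1) (M := 2 * f t) (half_pos hft)
    refine ⟨K2 * K, ?_⟩
    have hcomp : LipschitzOnWith (K2 * K) ((fun z : ℝ => z ^ (N - 1)) ∘ f)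
        (Set.Ioo (t - s) (t + s)) := by
      refine hK2.comp (hK.mono ?_) ?_
      · exact fun v hv => (hsub hv).1.1
      · exact fun v hv => (hsub hv).1.2
    refine myLipschitzOnWith_congr hcomp ?_
    intro v hv
    have hv' : v ∈ Set.Ioo (0:ℝ) D := (hsub hv).2
    show (h v ^ (1 / (N - 1))) ^ (N - 1) = h v
    rw [one_div, Real.rpow_inv_rpow (hpos v hv').le (by linarith : N - 1 ≠ 0)]
  have deriv_part : ∀ t ∈ Set.Ioo (0:ℝ) D, DifferentiableAt ℝ h t →
      deriv (hmodel N) (t + (π - D)) / hmodel N (t + (π - D)) ≤ deriv h t / h t ∧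
      deriv h t / h t ≤ deriv (hmodel N) t / hmodel N t := by
    intro t ht hdiff
    have h0t := ht.1
    have htD := ht.2
    have htπ : t < π := lt_of_lt_of_le htD hD.2
    have hht : 0 < h t := hpos t ht
    have hsint : 0 < Real.sin t := Real.sin_pos_of_pos_of_lt_pi h0t htπ
    have hsinDt : 0 < Real.sin (D - t) :=
      Real.sin_pos_of_pos_of_lt_pi (by linarith) (by linarith [hD.2])
    have hN0 : (0:ℝ) < N - 1 := by linarith
    have hfd : HasDerivAt f (deriv h t * (1 / (N - 1)) * h t ^ (1 / (N - 1) - 1)) t :=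
      hdiff.hasDerivAt.rpow_const (Or.inl hht.ne')
    have hP : 0 < f t := Real.rpow_pos_of_pos hht _
    have hQh : h t ^ (1 / (N - 1) - 1) * h t = f t := by
      simp only [hf_def]
      rw [← Real.rpow_add_one hht.ne']
      ring_nf
    have hinv : (N - 1) * (1 / (N - 1)) = 1 := by field_simp
    constructor
    · -- lower bound
      have hsd : HasDerivAt (fun u => Real.sin (D - u)) (-Real.cos (D - t)) t := by
        have h1 : HasDerivAt (fun u : ℝ => D - u) (-1) t := (hasDerivAt_id t).const_sub D
        have := (Real.hasDerivAt_sin (D - t)).comp t h1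
        rw [mul_neg_one] at this
        exact this
      have hg2 : HasDerivAt (fun u => f u / Real.sin (D - u))
          ((deriv h t * (1 / (N - 1)) * h t ^ (1 / (N - 1) - 1) * Real.sin (D - t)
            - f t * (-Real.cos (D - t))) / Real.sin (D - t) ^ 2) t :=
        hfd.div hsd hsinDt.ne'
      have mono2 : ∀ x ∈ Set.Ioo (0:ℝ) D, ∀ y ∈ Set.Ioo (0:ℝ) D, x ≤ y →
          f x / Real.sin (D - x) ≤ f y / Real.sin (D - y) := by
        intro x hx y hy hxy
        have sx : 0 < Real.sin (D - x) :=
          Real.sin_pos_of_pos_of_lt_pi (by linarith [hx.2]) (by linarith [hx.1, hD.2])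
        have sy : 0 < Real.sin (D - y) :=
          Real.sin_pos_of_pos_of_lt_pi (by linarith [hy.2]) (by linarith [hy.1, hD.2])
        rw [div_le_div_iff₀ sx sy]
        have := claimB x y hx.1.le hxy hy.2.le
        linarith
      have hd2 := myderiv_nonneg_of_monoOn h0t htD mono2 hg2
      have hnum2 : 0 ≤ deriv h t * (1 / (N - 1)) * h t ^ (1 / (N - 1) - 1) * Real.sin (D - t)
          + f t * Real.cos (D - t) := by
        by_contra hcon
        push_neg at hcon
        have : (deriv h t * (1 / (N - 1)) * h t ^ (1 / (N - 1) - 1) * Real.sin (D - t)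
            - f t * (-Real.cos (D - t))) / Real.sin (D - t) ^ 2 < 0 :=
          div_neg_of_neg_of_pos (by linarith) (by positivity)
        linarith
      have m := mul_le_mul_of_nonneg_left hnum2 (by positivity : (0:ℝ) ≤ (N - 1) * h t)
      rw [mul_zero] at m
      have expand : (N - 1) * h t * (deriv h t * (1 / (N - 1)) * h t ^ (1 / (N - 1) - 1)
            * Real.sin (D - t) + f t * Real.cos (D - t))
          = ((N - 1) * (1 / (N - 1))) * (deriv h t * (h t ^ (1 / (N - 1) - 1) * h t)
            * Real.sin (D - t)) + (N - 1) * h t * f t * Real.cos (D - t) := by ring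
      rw [expand, hinv, one_mul, hQh] at m
      have e0 : t + (π - D) = π - (D - t) := by ring
      rw [e0, mylogDeriv_hmodel hN1 (by linarith [hD.2]) (by linarith),
        Real.cos_pi_sub, Real.sin_pi_sub]
      have e1 : (N - 1) * (-Real.cos (D - t) / Real.sin (D - t))
          = ((N - 1) * -Real.cos (D - t)) / Real.sin (D - t) := by ring
      rw [e1, div_le_div_iff₀ hsinDt hht]
      apply le_of_mul_le_mul_right ?_ hP
      nlinarith [m]
    · -- upper bound
      have hg1 : HasDerivAt (fun u => f u / Real.sin u)
          ((deriv h t * (1 / (N - 1)) * h t ^ (1 / (N - 1) - 1) * Real.sin t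
            - f t * Real.cos t) / Real.sin t ^ 2) t :=
        hfd.div (Real.hasDerivAt_sin t) hsint.ne'
      have mono1 : ∀ x ∈ Set.Ioo (0:ℝ) D, ∀ y ∈ Set.Ioo (0:ℝ) D, x ≤ y →
          -(f x / Real.sin x) ≤ -(f y / Real.sin y) := by
        intro x hx y hy hxy
        have sx : 0 < Real.sin x :=
          Real.sin_pos_of_pos_of_lt_pi hx.1 (by linarith [hx.2, hD.2])
        have sy : 0 < Real.sin y :=
          Real.sin_pos_of_pos_of_lt_pi hy.1 (by linarith [hy.2, hD.2])
        have := claimA x y hx.1.le hxy hy.2.le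
        rw [neg_le_neg_iff, div_le_div_iff₀ sy sx]
        linarith
      have hd1 := myderiv_nonneg_of_monoOn h0t htD mono1 hg1.neg
      have hnum1 : deriv h t * (1 / (N - 1)) * h t ^ (1 / (N - 1) - 1) * Real.sin t
          - f t * Real.cos t ≤ 0 := by
        by_contra hcon
        push_neg at hcon
        have : 0 < (deriv h t * (1 / (N - 1)) * h t ^ (1 / (N - 1) - 1) * Real.sin t
            - f t * Real.cos t) / Real.sin t ^ 2 := div_pos hcon (by positivity)
        linarith
      have m := mul_le_mul_of_nonneg_left hnum1 (by positivity : (0:ℝ) ≤ (N - 1) * h t)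
      rw [mul_zero] at m
      have expand : (N - 1) * h t * (deriv h t * (1 / (N - 1)) * h t ^ (1 / (N - 1) - 1)
            * Real.sin t - f t * Real.cos t)
          = ((N - 1) * (1 / (N - 1))) * (deriv h t * (h t ^ (1 / (N - 1) - 1) * h t)
            * Real.sin t) - (N - 1) * h t * f t * Real.cos t := by ring
      rw [expand, hinv, one_mul, hQh] at m
      rw [mylogDeriv_hmodel hN1 h0t htπ]
      have e1 : (N - 1) * (Real.cos t / Real.sin t)
          = ((N - 1) * Real.cos t) / Real.sin t := by ring
      rw [e1, div_le_div_iff₀ hht hsint]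
      apply le_of_mul_le_mul_right ?_ hP
      nlinarith [m]
  exact ⟨lip, deriv_part⟩
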